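/- Define G(ν, κ, x) := tanh(ν x + ln √((ν + κ)/(ν − κ))) if ν > κ, G(ν, κ, x) := 1 if ν = κ, and G(ν, κ, x) := coth(ν x + ln √((κ + ν)/(κ − ν))) if ν < κ. Then for every μ < 0 and every ζ ∈ [0,1], setting a := −√|μ| · ( G(√|μ|, k₀², ζ) + G(√|μ|, k₁², 1 − ζ) ), one has λ₁(a·δ_ζ) = μ. -/

import Mathlib

open MeasureTheory Set Real Filter

/-- A test function on `[0,1]`: `y` is absolutely continuous on `[0,1]` with
derivative `g` belonging to `L²[0,1]`. -/
def IsTest (y g : ℝ → ℝ) : Prop :=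
  (∀ x ∈ Icc (0:ℝ) 1, y x = y 0 + ∫ t in (0:ℝ)..x, g t) ∧
  IntegrableOn g (Icc (0:ℝ) 1) ∧
  IntegrableOn (fun x => (g x) ^ 2) (Icc (0:ℝ) 1)

/-- The set of Rayleigh quotients of test functions for the Sturm–Liouville problem
`-y'' + q y = λ y`, `y'(0) - k₀² y(0) = 0`, `y'(1) + k₁² y(1) = 0`. -/
def RayleighSet (k0 k1 : ℝ) (q : ℝ → ℝ) : Set ℝ :=
  { r : ℝ | ∃ y g : ℝ → ℝ, IsTest y g ∧ (0 < ∫ x in (0:ℝ)..1, (y x) ^ 2) ∧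
      r = ((∫ x in (0:ℝ)..1, ((g x) ^ 2 + q x * (y x) ^ 2))
            + k0 ^ 2 * (y 0) ^ 2 + k1 ^ 2 * (y 1) ^ 2) / (∫ x in (0:ℝ)..1, (y x) ^ 2) }

/-- The first eigenvalue `λ₁(q)` defined as the infimum of the Rayleigh quotient. -/
noncomputable def lam1 (k0 k1 : ℝ) (q : ℝ → ℝ) : ℝ :=
  sInf (RayleighSet k0 k1 q)

/-- First eigenvalue `λ₁(a·δ_ζ)` of the problem with point-mass potential `a·δ_ζ`
and boundary conditions `y'(0) - k₀² y(0) = 0`, `y'(1) + k₁² y(1) = 0`, defined as the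
infimum of the corresponding Rayleigh quotient. -/
noncomputable def lam1Delta (k0 k1 a ζ : ℝ) : ℝ :=
  sInf { r : ℝ | ∃ y g : ℝ → ℝ, IsTest y g ∧ (0 < ∫ x in (0:ℝ)..1, (y x) ^ 2) ∧
    r = ((∫ x in (0:ℝ)..1, (g x) ^ 2) + a * (y ζ) ^ 2
          + k0 ^ 2 * (y 0) ^ 2 + k1 ^ 2 * (y 1) ^ 2) / (∫ x in (0:ℝ)..1, (y x) ^ 2) }

/-- The function `G(ν, κ, x)` from the formula for `F(μ, ζ)` with `μ < 0`. -/
noncomputable def Gfun (ν κ x : ℝ) : ℝ :=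
  if κ < ν then Real.tanh (ν * x + Real.log (Real.sqrt ((ν + κ) / (ν - κ))))
  else if ν = κ then 1
  else Real.cosh (ν * x + Real.log (Real.sqrt ((κ + ν) / (κ - ν)))) /
       Real.sinh (ν * x + Real.log (Real.sqrt ((κ + ν) / (κ - ν))))

open intervalIntegral

lemma diag_null {s t : ℝ} :
    ((volume.restrict (Ioc s t)).prod (volume.restrict (Ioc s t)))
      {z : ℝ × ℝ | z.1 = z.2} = 0 := by
  rw [Measure.prod_apply (measurableSet_eq_fun measurable_fst measurable_snd)]
  have : ∀ x : ℝ, (volume.restrict (Ioc s t)) (Prod.mk x ⁻¹' {z : ℝ × ℝ | z.1 = z.2}) = 0 := by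
    intro x
    have hs : (Prod.mk x ⁻¹' {z : ℝ × ℝ | z.1 = z.2}) = {x} := by
      ext v; simp [eq_comm]
    rw [hs]
    exact le_antisymm ((Measure.restrict_le_self _).trans_eq (volume_singleton)) zero_le
  simp [this]

lemma primitive_mul_primitive {s t : ℝ} (hst : s ≤ t) {h k : ℝ → ℝ}
    (hh : IntegrableOn h (Icc s t)) (hk : IntegrableOn k (Icc s t)) :
    (∫ v in s..t, h v) * (∫ v in s..t, k v)
      = (∫ x in s..t, (∫ v in s..x, h v) * k x)
        + (∫ x in s..t, (∫ v in s..x, k v) * h x) := by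
  have hh' : IntegrableOn h (Ioc s t) := hh.mono_set Ioc_subset_Icc_self
  have hk' : IntegrableOn k (Ioc s t) := hk.mono_set Ioc_subset_Icc_self
  set μA := volume.restrict (Ioc s t) with hμA
  have hmle : MeasurableSet {z : ℝ × ℝ | z.2 ≤ z.1} :=
    measurableSet_le measurable_snd measurable_fst
  have hmle' : MeasurableSet {z : ℝ × ℝ | z.1 ≤ z.2} :=
    measurableSet_le measurable_fst measurable_snd
  -- the three product-integrable functions
  have hbase1 : Integrable (fun z : ℝ × ℝ => h z.2 * k z.1) (μA.prod μA) := by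
    have := (Integrable.mul_prod hk' hh' : Integrable (fun z : ℝ × ℝ => k z.1 * h z.2) (μA.prod μA))
    simpa [mul_comm] using this
  have hbase2 : Integrable (fun z : ℝ × ℝ => k z.2 * h z.1) (μA.prod μA) := by
    have := (Integrable.mul_prod hh' hk' : Integrable (fun z : ℝ × ℝ => h z.1 * k z.2) (μA.prod μA))
    simpa [mul_comm] using this
  have hG1 : Integrable ({z : ℝ × ℝ | z.2 ≤ z.1}.indicator
      (fun z : ℝ × ℝ => h z.2 * k z.1)) (μA.prod μA) := hbase1.indicator hmle
  have hG2 : Integrable ({z : ℝ × ℝ | z.2 ≤ z.1}.indicator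
      (fun z : ℝ × ℝ => k z.2 * h z.1)) (μA.prod μA) := hbase2.indicator hmle
  have hG2' : Integrable ({z : ℝ × ℝ | z.1 ≤ z.2}.indicator
      (fun z : ℝ × ℝ => k z.1 * h z.2)) (μA.prod μA) :=
    (Integrable.mul_prod hk' hh').indicator hmle'
  -- identification of the two iterated integrals
  have key : ∀ (f : ℝ → ℝ) (hf : IntegrableOn f (Icc s t)) (e : ℝ → ℝ)
      (hfI : Integrable ({z : ℝ × ℝ | z.2 ≤ z.1}.indicator
        (fun z : ℝ × ℝ => f z.2 * e z.1)) (μA.prod μA)),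
      (∫ x in s..t, (∫ v in s..x, f v) * e x)
        = ∫ z, ({z : ℝ × ℝ | z.2 ≤ z.1}.indicator
            (fun z : ℝ × ℝ => f z.2 * e z.1)) z ∂(μA.prod μA) := by
    intro f hf e hfI
    rw [integral_of_le hst]
    have step : ∀ x ∈ Ioc s t,
        (∫ v in s..x, f v) * e x
          = ∫ v, ({z : ℝ × ℝ | z.2 ≤ z.1}.indicator
              (fun z : ℝ × ℝ => f z.2 * e z.1)) (x, v) ∂μA := by
      intro x hx
      have h1 : (fun v => ({z : ℝ × ℝ | z.2 ≤ z.1}.indicator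
          (fun z : ℝ × ℝ => f z.2 * e z.1)) (x, v))
          = (Iic x).indicator (fun v => f v * e x) := by
        funext v
        simp [Set.indicator_apply]
      rw [h1, MeasureTheory.integral_indicator measurableSet_Iic, hμA,
        Measure.restrict_restrict measurableSet_Iic]
      have h2 : Iic x ∩ Ioc s t = Ioc s x := by
        ext v
        simp only [mem_inter_iff, mem_Iic, mem_Ioc]
        constructor
        · rintro ⟨h1', h2', _⟩; exact ⟨h2', h1'⟩
        · rintro ⟨h1', h2'⟩; exact ⟨h2', h1', h2'.trans hx.2⟩
      rw [h2, MeasureTheory.integral_mul_const, integral_of_le hx.1.le]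
    rw [setIntegral_congr_fun measurableSet_Ioc step]
    exact (integral_integral (by exact hfI)).trans rfl
  rw [key h hh k hG1, key k hk h hG2]
  -- swap the second one
  have hswap : (∫ z, ({z : ℝ × ℝ | z.2 ≤ z.1}.indicator
      (fun z : ℝ × ℝ => k z.2 * h z.1)) z ∂(μA.prod μA))
      = ∫ z, ({z : ℝ × ℝ | z.1 ≤ z.2}.indicator
          (fun z : ℝ × ℝ => k z.1 * h z.2)) z ∂(μA.prod μA) := by
    rw [← integral_prod_swap]
    exact integral_congr_ae (Filter.Eventually.of_forall fun z => by
      simp [Set.indicator_apply])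
  rw [hswap, ← integral_add hG1 hG2']
  have hae : (fun z : ℝ × ℝ => ({z : ℝ × ℝ | z.2 ≤ z.1}.indicator
      (fun z : ℝ × ℝ => h z.2 * k z.1)) z
        + ({z : ℝ × ℝ | z.1 ≤ z.2}.indicator (fun z : ℝ × ℝ => k z.1 * h z.2)) z)
      =ᵐ[μA.prod μA] (fun z : ℝ × ℝ => h z.2 * k z.1) := by
    have hd : ((μA.prod μA) {z : ℝ × ℝ | z.1 = z.2}) = 0 := diag_null
    refine (measure_mono_null ?_ hd : _)
    intro z hz
    simp only [mem_setOf_eq] at hz ⊢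
    by_contra hne
    rcases lt_trichotomy z.1 z.2 with hlt | heq | hgt
    · apply hz
      simp [Set.indicator_apply, not_le.mpr hlt, le_of_lt hlt, mul_comm]
    · exact hne heq
    · apply hz
      simp [Set.indicator_apply, not_le.mpr hgt, le_of_lt hgt, mul_comm]
  rw [integral_congr_ae hae]
  rw [show (fun z : ℝ × ℝ => h z.2 * k z.1) = (fun z : ℝ × ℝ => k z.1 * h z.2) from
    funext fun z => mul_comm _ _, integral_prod_mul]
  rw [integral_of_le hst, integral_of_le hst]
  ring

lemma cont_mul_intervalIntegrable {c k : ℝ → ℝ} {s t : ℝ} (hst : s ≤ t)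
    (hc : ContinuousOn c (Icc s t)) (hk : IntegrableOn k (Icc s t)) :
    IntervalIntegrable (fun x => c x * k x) volume s t := by
  have hk' : IntervalIntegrable k volume s t := by
    apply IntegrableOn.intervalIntegrable
    rwa [uIcc_of_le hst]
  exact hk'.continuousOn_mul (by rwa [uIcc_of_le hst])

lemma prod_rule {s t : ℝ} (hst : s ≤ t) {u w h k : ℝ → ℝ}
    (hh : IntegrableOn h (Icc s t)) (hk : IntegrableOn k (Icc s t))
    (hu : ∀ x ∈ Icc s t, u x = u s + ∫ v in s..x, h v)
    (hw : ∀ x ∈ Icc s t, w x = w s + ∫ v in s..x, k v) :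
    u t * w t = u s * w s + ∫ x in s..t, (u x * k x + w x * h x) := by
  set F : ℝ → ℝ := fun x => ∫ v in s..x, h v with hF
  set K : ℝ → ℝ := fun x => ∫ v in s..x, k v with hK
  have hFc : ContinuousOn F (Icc s t) := by
    have := intervalIntegral.continuousOn_primitive_interval
      (a := s) (b := t) (μ := volume) (f := h) (by rwa [uIcc_of_le hst])
    rwa [uIcc_of_le hst] at this
  have hKc : ContinuousOn K (Icc s t) := by
    have := intervalIntegral.continuousOn_primitive_interval
      (a := s) (b := t) (μ := volume) (f := k) (by rwa [uIcc_of_le hst])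
    rwa [uIcc_of_le hst] at this
  have hFk : IntervalIntegrable (fun x => F x * k x) volume s t :=
    cont_mul_intervalIntegrable hst hFc hk
  have hKh : IntervalIntegrable (fun x => K x * h x) volume s t :=
    cont_mul_intervalIntegrable hst hKc hh
  have hhi : IntervalIntegrable h volume s t := by
    apply IntegrableOn.intervalIntegrable; rwa [uIcc_of_le hst]
  have hki : IntervalIntegrable k volume s t := by
    apply IntegrableOn.intervalIntegrable; rwa [uIcc_of_le hst]
  have heq : ∀ x ∈ uIcc s t,
      u x * k x + w x * h x
        = (u s * k x + w s * h x) + (F x * k x + K x * h x) := by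
    intro x hx
    rw [uIcc_of_le hst] at hx
    rw [hu x hx, hw x hx]; ring
  rw [integral_congr heq, integral_add ((hki.const_mul _).add (hhi.const_mul _))
    (hFk.add hKh), integral_add (hki.const_mul _) (hhi.const_mul _),
    integral_add hFk hKh, intervalIntegral.integral_const_mul, intervalIntegral.integral_const_mul,
    ← primitive_mul_primitive hst hh hk]
  have hut : u t = u s + F t := hu t ⟨hst, le_rfl⟩
  have hwt : w t = w s + K t := hw t ⟨hst, le_rfl⟩
  rw [hut, hwt]; ring

lemma contOn_mul_integrableOn {c k : ℝ → ℝ} {s t : ℝ}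
    (hc : ContinuousOn c (Icc s t)) (hk : IntegrableOn k (Icc s t)) :
    IntegrableOn (fun x => c x * k x) (Icc s t) :=
  hk.continuousOn_mul_of_subset hc isCompact_Icc measurableSet_Icc (subset_refl _)

lemma primitive_continuousOn {s t : ℝ} (hst : s ≤ t) {h : ℝ → ℝ}
    (hh : IntegrableOn h (Icc s t)) :
    ContinuousOn (fun x => ∫ v in s..x, h v) (Icc s t) := by
  have := intervalIntegral.continuousOn_primitive_interval
    (a := s) (b := t) (μ := volume) (f := h) (by rwa [uIcc_of_le hst])
  rwa [uIcc_of_le hst] at this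

lemma piece_lower_bound {s t ν : ℝ} (hst : s ≤ t) {y g q : ℝ → ℝ}
    (hg : IntegrableOn g (Icc s t)) (hg2 : IntegrableOn (fun x => (g x) ^ 2) (Icc s t))
    (hy : ∀ x ∈ Icc s t, y x = y s + ∫ v in s..x, g v)
    (hq : ∀ x ∈ Icc s t, HasDerivAt q (ν ^ 2 - (q x) ^ 2) x) :
    q t * (y t) ^ 2 - q s * (y s) ^ 2 - ν ^ 2 * ∫ x in s..t, (y x) ^ 2
      ≤ ∫ x in s..t, (g x) ^ 2 := by
  have hqc : ContinuousOn q (Icc s t) := fun x hx => ((hq x hx).continuousAt).continuousWithinAt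
  have hyc : ContinuousOn y (Icc s t) := by
    have hcc : ContinuousOn (fun x => y s + ∫ v in s..x, g v) (Icc s t) :=
      continuousOn_const.add (primitive_continuousOn hst hg)
    exact hcc.congr hy
  have hk2 : IntegrableOn (fun x => y x * g x + y x * g x) (Icc s t) :=
    (contOn_mul_integrableOn hyc hg).add (contOn_mul_integrableOn hyc hg)
  -- y² is a primitive of 2yg
  have hy2 : ∀ x ∈ Icc s t, y x * y x = y s * y s + ∫ v in s..x, (y v * g v + y v * g v) := by
    intro x hx
    exact prod_rule hx.1 (hg.mono_set (Icc_subset_Icc le_rfl hx.2))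
      (hg.mono_set (Icc_subset_Icc le_rfl hx.2))
      (fun z hz => hy z ⟨hz.1, hz.2.trans hx.2⟩) (fun z hz => hy z ⟨hz.1, hz.2.trans hx.2⟩)
  -- q is a primitive of ν² - q²
  have hqprim : ∀ x ∈ Icc s t, q x = q s + ∫ v in s..x, (ν ^ 2 - (q v) ^ 2) := by
    intro x hx
    have : ∫ v in s..x, (ν ^ 2 - (q v) ^ 2) = q x - q s := by
      apply intervalIntegral.integral_eq_sub_of_hasDerivAt
      · intro v hv
        rw [uIcc_of_le hx.1] at hv
        exact hq v ⟨hv.1, hv.2.trans hx.2⟩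
      · apply ContinuousOn.intervalIntegrable
        rw [uIcc_of_le hx.1]
        exact (continuousOn_const.sub (hqc.pow 2)).mono (Icc_subset_Icc le_rfl hx.2)
    rw [this]; ring
  have hqd : IntegrableOn (fun v => ν ^ 2 - (q v) ^ 2) (Icc s t) :=
    (continuousOn_const.sub (hqc.pow 2)).integrableOn_Icc
  -- the integration-by-parts identity
  have key : q t * (y t * y t) = q s * (y s * y s)
      + ∫ x in s..t, (q x * (y x * g x + y x * g x)
          + (y x * y x) * (ν ^ 2 - (q x) ^ 2)) := by
    refine prod_rule (w := fun x => y x * y x) hst hqd hk2 hqprim ?_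
    intro x hx; exact hy2 x hx
  -- interval integrability facts
  have hg2I : IntervalIntegrable (fun x => (g x) ^ 2) volume s t := by
    apply IntegrableOn.intervalIntegrable; rwa [uIcc_of_le hst]
  have hBintI : IntervalIntegrable (fun x => q x * (y x * g x + y x * g x)
      + (y x * y x) * (ν ^ 2 - (q x) ^ 2)) volume s t := by
    apply IntegrableOn.intervalIntegrable; rw [uIcc_of_le hst]
    exact (contOn_mul_integrableOn hqc hk2).add
      (((hyc.mul hyc).mul (continuousOn_const.sub (hqc.pow 2))).integrableOn_Icc)
  have hy2I : IntervalIntegrable (fun x => (y x) ^ 2) volume s t := by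
    apply ContinuousOn.intervalIntegrable; rw [uIcc_of_le hst]; exact hyc.pow 2
  -- positivity of the square
  have hpos : 0 ≤ ∫ x in s..t, (g x - q x * y x) ^ 2 :=
    intervalIntegral.integral_nonneg hst (fun x _ => sq_nonneg _)
  have hexp : (fun x => (g x - q x * y x) ^ 2)
      = fun x => (g x) ^ 2 - (q x * (y x * g x + y x * g x)
          + (y x * y x) * (ν ^ 2 - (q x) ^ 2)) + ν ^ 2 * (y x) ^ 2 := by
    funext x; ring
  rw [hexp] at hpos
  rw [intervalIntegral.integral_add (hg2I.sub hBintI) (hy2I.const_mul _),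
    intervalIntegral.integral_sub hg2I hBintI, intervalIntegral.integral_const_mul] at hpos
  have hyt : (y t) ^ 2 = y t * y t := sq (y t) ▸ (sq (y t)).symm ▸ rfl
  nlinarith [key, hpos]

noncomputable def Dfun (ν κ x : ℝ) : ℝ := ν * Real.cosh (ν * x) + κ * Real.sinh (ν * x)
noncomputable def Nfun (ν κ x : ℝ) : ℝ := ν * Real.sinh (ν * x) + κ * Real.cosh (ν * x)
noncomputable def pfun (ν κ x : ℝ) : ℝ := ν * (Nfun ν κ x / Dfun ν κ x)

lemma Dfun_pos {ν κ x : ℝ} (hν : 0 < ν) (hκ : 0 ≤ κ) (hx : 0 ≤ x) : 0 < Dfun ν κ x :=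
  add_pos_of_pos_of_nonneg (mul_pos hν (Real.cosh_pos _))
    (mul_nonneg hκ (Real.sinh_nonneg_iff.mpr (mul_nonneg hν.le hx)))

lemma hasDerivAt_Dfun (ν κ x : ℝ) : HasDerivAt (Dfun ν κ) (ν * Nfun ν κ x) x := by
  have h1 : HasDerivAt (fun x : ℝ => ν * x) ν x := by
    simpa using (hasDerivAt_id x).const_mul ν
  have h := (h1.cosh.const_mul ν).add (h1.sinh.const_mul κ)
  refine h.congr_deriv ?_
  unfold Nfun; ring

lemma hasDerivAt_Nfun (ν κ x : ℝ) : HasDerivAt (Nfun ν κ) (ν * Dfun ν κ x) x := by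
  have h1 : HasDerivAt (fun x : ℝ => ν * x) ν x := by
    simpa using (hasDerivAt_id x).const_mul ν
  have h := (h1.sinh.const_mul ν).add (h1.cosh.const_mul κ)
  refine h.congr_deriv ?_
  unfold Dfun; ring

lemma hasDerivAt_pfun {ν κ x : ℝ} (hν : 0 < ν) (hκ : 0 ≤ κ) (hx : 0 ≤ x) :
    HasDerivAt (pfun ν κ) (ν ^ 2 - (pfun ν κ x) ^ 2) x := by
  have hD := Dfun_pos hν hκ hx
  have h := (((hasDerivAt_Nfun ν κ x).div (hasDerivAt_Dfun ν κ x) hD.ne')).const_mul ν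
  refine h.congr_deriv ?_
  rw [pfun]
  field_simp

lemma pfun_zero {ν κ : ℝ} (hν : ν ≠ 0) : pfun ν κ 0 = κ := by
  rw [pfun, Nfun, Dfun]
  simp
  field_simp

lemma G_eq {ν κ x : ℝ} (hν : 0 < ν) (hκ : 0 ≤ κ) (hx : 0 ≤ x) :
    ν * Gfun ν κ x = pfun ν κ x := by
  have hD := Dfun_pos hν hκ hx
  rcases lt_trichotomy κ ν with hlt | heq | hgt
  · rw [Gfun, if_pos hlt]
    set r : ℝ := (ν + κ) / (ν - κ) with hrdef
    have hsub : 0 < ν - κ := sub_pos.mpr hlt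
    have hr : 0 < r := div_pos (by linarith) hsub
    set s : ℝ := Real.sqrt r with hsdef
    have hs : 0 < s := Real.sqrt_pos.mpr hr
    have hs2 : s ^ 2 * (ν - κ) = ν + κ := by
      rw [hsdef, Real.sq_sqrt hr.le, hrdef]
      field_simp
    set A : ℝ := ν * x + Real.log s with hAdef
    have hexpA : Real.exp A = Real.exp (ν * x) * s := by
      rw [hAdef, Real.exp_add, Real.exp_log hs]
    have hexpA' : Real.exp (-A) = Real.exp (-(ν * x)) / s := by
      rw [hAdef, neg_add, Real.exp_add, Real.exp_neg (Real.log s), Real.exp_log hs,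
        div_eq_mul_inv]
    rw [Real.tanh_eq_sinh_div_cosh]
    rw [pfun]
    congr 1
    rw [div_eq_div_iff (Real.cosh_pos A).ne' hD.ne']
    rw [Real.sinh_eq, Real.cosh_eq, hexpA, hexpA']
    unfold Nfun Dfun
    rw [Real.sinh_eq, Real.cosh_eq]
    have hEE : Real.exp (ν * x) * Real.exp (-(ν * x)) = 1 := by
      rw [← Real.exp_add]; simp
    field_simp
    linear_combination (2 * Real.exp (ν * x) * Real.exp (-(ν * x))) * hs2
  · rw [Gfun, if_neg (by rw [heq]; exact lt_irrefl ν), if_pos heq.symm]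
    have hND : Nfun ν κ x = Dfun ν κ x := by
      rw [Nfun, Dfun, ← heq]; ring
    rw [pfun, hND, div_self hD.ne', mul_one]
  · rw [Gfun, if_neg (not_lt.mpr hgt.le), if_neg hgt.ne]
    set r : ℝ := (κ + ν) / (κ - ν) with hrdef
    have hsub : 0 < κ - ν := sub_pos.mpr hgt
    have hr1 : 1 < r := by
      rw [hrdef, lt_div_iff₀ hsub]; linarith
    have hr : 0 < r := lt_trans one_pos hr1
    set s : ℝ := Real.sqrt r with hsdef
    have hs1 : 1 < s := by
      rw [hsdef]
      nlinarith [Real.sq_sqrt hr.le, Real.sqrt_nonneg r]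
    have hs : 0 < s := lt_trans one_pos hs1
    have hs2 : s ^ 2 * (κ - ν) = κ + ν := by
      rw [hsdef, Real.sq_sqrt hr.le, hrdef]
      field_simp
    set A : ℝ := ν * x + Real.log s with hAdef
    have hA : 0 < A := by
      have : 0 < Real.log s := Real.log_pos hs1
      have : 0 ≤ ν * x := mul_nonneg hν.le hx
      rw [hAdef]; linarith [Real.log_pos hs1]
    have hsinhA : 0 < Real.sinh A := Real.sinh_pos_iff.mpr hA
    have hexpA : Real.exp A = Real.exp (ν * x) * s := by
      rw [hAdef, Real.exp_add, Real.exp_log hs]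
    have hexpA' : Real.exp (-A) = Real.exp (-(ν * x)) / s := by
      rw [hAdef, neg_add, Real.exp_add, Real.exp_neg (Real.log s), Real.exp_log hs,
        div_eq_mul_inv]
    rw [pfun]
    congr 1
    rw [div_eq_div_iff hsinhA.ne' hD.ne']
    rw [Real.sinh_eq, Real.cosh_eq, hexpA, hexpA']
    unfold Nfun Dfun
    rw [Real.sinh_eq, Real.cosh_eq]
    field_simp
    linear_combination (-2 * Real.exp (ν * x) * Real.exp (-(ν * x))) * hs2

lemma Dfun_continuous (ν κ : ℝ) : Continuous (fun x => Dfun ν κ x) := by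
  unfold Dfun; fun_prop

lemma Nfun_continuous (ν κ : ℝ) : Continuous (fun x => Nfun ν κ x) := by
  unfold Nfun; fun_prop

lemma piecewise_intervalIntegrable {gL gR : ℝ → ℝ} (hgL : Continuous gL)
    (hgR : Continuous gR) (ζ a b : ℝ) :
    IntervalIntegrable (fun x => if x ≤ ζ then gL x else gR x) volume a b := by
  have hbound : IntervalIntegrable (fun x => |gL x| + |gR x|) volume a b :=
    (hgL.abs.add hgR.abs).intervalIntegrable a b
  refine hbound.mono_fun ?_ ?_
  · exact (Measurable.ite measurableSet_Iic hgL.measurable hgR.measurable).aestronglyMeasurable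
  · apply Filter.Eventually.of_forall
    intro x
    simp only [Real.norm_eq_abs]
    rw [abs_of_nonneg (by positivity : (0:ℝ) ≤ |gL x| + |gR x|)]
    split_ifs
    · exact le_add_of_le_of_nonneg le_rfl (abs_nonneg _)
    · exact le_add_of_nonneg_of_le (abs_nonneg _) le_rfl

lemma member (k0 k1 ν ζ : ℝ) (hν : 0 < ν) (hζ0 : 0 ≤ ζ) (hζ1 : ζ ≤ 1) :
    ∃ y g : ℝ → ℝ, IsTest y g ∧ (0 < ∫ x in (0:ℝ)..1, (y x) ^ 2) ∧
      ((∫ x in (0:ℝ)..1, (g x) ^ 2)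
          + (-(pfun ν (k0 ^ 2) ζ + pfun ν (k1 ^ 2) (1 - ζ))) * (y ζ) ^ 2
          + k0 ^ 2 * (y 0) ^ 2 + k1 ^ 2 * (y 1) ^ 2)
        = (-(ν ^ 2)) * ∫ x in (0:ℝ)..1, (y x) ^ 2 := by
  have hκ0 : 0 ≤ k0 ^ 2 := sq_nonneg k0
  have hκ1 : 0 ≤ k1 ^ 2 := sq_nonneg k1
  set κ0 := k0 ^ 2
  set κ1 := k1 ^ 2
  set cR : ℝ := Dfun ν κ1 (1 - ζ) with hcR
  set cL : ℝ := Dfun ν κ0 ζ with hcL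
  have hcRpos : 0 < cR := Dfun_pos hν hκ1 (by linarith)
  have hcLpos : 0 < cL := Dfun_pos hν hκ0 hζ0
  set yL : ℝ → ℝ := fun x => Dfun ν κ0 x * cR with hyLdef
  set yR : ℝ → ℝ := fun x => cL * Dfun ν κ1 (1 - x) with hyRdef
  set gL : ℝ → ℝ := fun x => ν * Nfun ν κ0 x * cR with hgLdef
  set gR : ℝ → ℝ := fun x => cL * (-(ν * Nfun ν κ1 (1 - x))) with hgRdef
  set y : ℝ → ℝ := fun x => if x ≤ ζ then yL x else yR x with hydef
  set g : ℝ → ℝ := fun x => if x ≤ ζ then gL x else gR x with hgdef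
  -- continuity of branches
  have hyLc : Continuous yL := (Dfun_continuous ν κ0).mul continuous_const
  have hyRc : Continuous yR :=
    continuous_const.mul ((Dfun_continuous ν κ1).comp (continuous_const.sub continuous_id))
  have hgLc : Continuous gL := ((continuous_const.mul (Nfun_continuous ν κ0)).mul continuous_const)
  have hgRc : Continuous gR := continuous_const.mul
    ((continuous_const.mul ((Nfun_continuous ν κ1).comp (continuous_const.sub continuous_id))).neg)
  have hyc : Continuous y := by
    apply Continuous.if_le hyLc hyRc continuous_id continuous_const
    intro x hx
    have hx' : x = ζ := hx
    rw [hx', hyLdef, hyRdef, hcR, hcL]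
  -- derivatives of branches
  have hLd : ∀ x : ℝ, HasDerivAt yL (gL x) x := fun x =>
    (hasDerivAt_Dfun ν κ0 x).mul_const cR
  have hinner : ∀ x : ℝ, HasDerivAt (fun x : ℝ => 1 - x) (-1) x := fun x => by
    simpa using (hasDerivAt_id x).const_sub 1
  have hRd : ∀ x : ℝ, HasDerivAt yR (gR x) x := by
    intro x
    have h := ((hasDerivAt_Dfun ν κ1 (1 - x)).comp x (hinner x)).const_mul cL
    refine h.congr_deriv ?_
    rw [hgRdef]; ring
  -- interval integrability
  have hg_ii : ∀ a b : ℝ, IntervalIntegrable g volume a b := fun a b =>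
    piecewise_intervalIntegrable hgLc hgRc ζ a b
  have hg2eq : (fun x => (g x) ^ 2) = fun x => if x ≤ ζ then (gL x) ^ 2 else (gR x) ^ 2 := by
    funext x
    by_cases h : x ≤ ζ <;> simp [hgdef, h]
  have hg2_ii : ∀ a b : ℝ, IntervalIntegrable (fun x => (g x) ^ 2) volume a b := fun a b => by
    rw [hg2eq]; exact piecewise_intervalIntegrable (hgLc.pow 2) (hgRc.pow 2) ζ a b
  -- the representation y x = y 0 + ∫₀ˣ g
  have hy0 : y 0 = ν * cR := by
    simp [hydef, hyLdef, if_pos hζ0, Dfun]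
  have hyζ : y ζ = cL * cR := by
    simp [hydef, hyLdef, if_pos le_rfl, hcL]
  have hy1 : y 1 = cL * ν := by
    by_cases h1ζ : 1 ≤ ζ
    · have : ζ = 1 := le_antisymm hζ1 h1ζ
      subst this
      simp [hydef, hyLdef, if_pos le_rfl, Dfun, hcR, hcL]
    · simp [hydef, hyRdef, if_neg h1ζ, Dfun]
  have hζint : ∫ t in (0:ℝ)..ζ, g t = cL * cR - Dfun ν κ0 0 * cR := by
    have hcong : ∫ t in (0:ℝ)..ζ, g t = ∫ t in (0:ℝ)..ζ, gL t := by
      apply intervalIntegral.integral_congr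
      intro t ht
      rw [uIcc_of_le hζ0] at ht
      simp [hgdef, ht.2]
    rw [hcong, intervalIntegral.integral_eq_sub_of_hasDerivAt (fun t _ => hLd t)
      (hgLc.intervalIntegrable 0 ζ)]
  have hrep : ∀ x ∈ Icc (0:ℝ) 1, y x = y 0 + ∫ t in (0:ℝ)..x, g t := by
    intro x hx
    by_cases hxζ : x ≤ ζ
    · have hcong : ∫ t in (0:ℝ)..x, g t = ∫ t in (0:ℝ)..x, gL t := by
        apply intervalIntegral.integral_congr
        intro t ht
        rw [uIcc_of_le hx.1] at ht
        simp [hgdef, ht.2.trans hxζ]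
      rw [hcong, intervalIntegral.integral_eq_sub_of_hasDerivAt (fun t _ => hLd t)
        (hgLc.intervalIntegrable 0 x)]
      simp only [hydef, if_pos hxζ, if_pos hζ0]
      ring
    · push_neg at hxζ
      have h1 : ∫ t in (0:ℝ)..x, g t = (∫ t in (0:ℝ)..ζ, g t) + ∫ t in ζ..x, g t :=
        (intervalIntegral.integral_add_adjacent_intervals (hg_ii 0 ζ) (hg_ii ζ x)).symm
      have h3 : ∫ t in ζ..x, g t = yR x - yR ζ := by
        have hcong : ∫ t in ζ..x, g t = ∫ t in ζ..x, gR t := by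
          apply intervalIntegral.integral_congr_ae
          apply Filter.Eventually.of_forall
          intro t ht
          rw [uIoc_of_le hxζ.le] at ht
          simp [hgdef, not_le.mpr ht.1]
        rw [hcong, intervalIntegral.integral_eq_sub_of_hasDerivAt (fun t _ => hRd t)
          (hgRc.intervalIntegrable ζ x)]
      rw [h1, hζint, h3]
      simp only [hydef, if_neg (not_le.mpr hxζ), if_pos hζ0]
      rw [hyRdef, hyLdef, hcL, hcR]
      ring
  have hIsTest : IsTest y g := by
    refine ⟨hrep, ?_, ?_⟩
    · rw [← intervalIntegrable_iff_integrableOn_Icc_of_le (by norm_num : (0:ℝ) ≤ 1)]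
      exact hg_ii 0 1
    · rw [← intervalIntegrable_iff_integrableOn_Icc_of_le (by norm_num : (0:ℝ) ≤ 1)]
      exact hg2_ii 0 1
  -- positivity of the denominator
  have hypos : ∀ x ∈ Icc (0:ℝ) 1, 0 < y x := by
    intro x hx
    by_cases hxζ : x ≤ ζ
    · simp only [hydef, if_pos hxζ, hyLdef]
      exact mul_pos (Dfun_pos hν hκ0 hx.1) hcRpos
    · simp only [hydef, if_neg hxζ, hyRdef]
      exact mul_pos hcLpos (Dfun_pos hν hκ1 (by linarith [hx.2]))
  have hden : 0 < ∫ x in (0:ℝ)..1, (y x) ^ 2 := by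
    apply intervalIntegral.intervalIntegral_pos_of_pos_on
      ((hyc.pow 2).intervalIntegrable 0 1)
    · intro x hx
      exact pow_pos (hypos x ⟨hx.1.le, hx.2.le⟩) 2
    · norm_num
  -- the FTC identities
  set ΦL : ℝ → ℝ := fun x => ν * Nfun ν κ0 x * Dfun ν κ0 x * cR ^ 2 with hΦLdef
  have hΦLd : ∀ x : ℝ, HasDerivAt ΦL ((gL x) ^ 2 + ν ^ 2 * (yL x) ^ 2) x := by
    intro x
    have h := (((hasDerivAt_Nfun ν κ0 x).const_mul ν).mul
      (hasDerivAt_Dfun ν κ0 x)).mul_const (cR ^ 2)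
    refine h.congr_deriv ?_
    rw [hgLdef, hyLdef]; ring
  set ΦR : ℝ → ℝ := fun x => cL ^ 2 * (-(ν * Nfun ν κ1 (1 - x)) * Dfun ν κ1 (1 - x))
    with hΦRdef
  have hΦRd : ∀ x : ℝ, HasDerivAt ΦR ((gR x) ^ 2 + ν ^ 2 * (yR x) ^ 2) x := by
    intro x
    have hN : HasDerivAt (fun x => Nfun ν κ1 (1 - x)) (-(ν * Dfun ν κ1 (1 - x))) x := by
      have := (hasDerivAt_Nfun ν κ1 (1 - x)).comp x (hinner x)
      exact this.congr_deriv (by ring)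
    have hD : HasDerivAt (fun x => Dfun ν κ1 (1 - x)) (-(ν * Nfun ν κ1 (1 - x))) x := by
      have := (hasDerivAt_Dfun ν κ1 (1 - x)).comp x (hinner x)
      exact this.congr_deriv (by ring)
    have h := ((((hN.const_mul ν).neg).mul hD).const_mul (cL ^ 2))
    refine h.congr_deriv ?_
    rw [hgRdef, hyRdef]; simp only [Pi.neg_apply]; ring
  have hFTCL : ∫ t in (0:ℝ)..ζ, ((gL t) ^ 2 + ν ^ 2 * (yL t) ^ 2) = ΦL ζ - ΦL 0 :=
    intervalIntegral.integral_eq_sub_of_hasDerivAt (fun t _ => hΦLd t)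
      (((hgLc.pow 2).add (continuous_const.mul (hyLc.pow 2))).intervalIntegrable 0 ζ)
  have hFTCR : ∫ t in ζ..(1:ℝ), ((gR t) ^ 2 + ν ^ 2 * (yR t) ^ 2) = ΦR 1 - ΦR ζ :=
    intervalIntegral.integral_eq_sub_of_hasDerivAt (fun t _ => hΦRd t)
      (((hgRc.pow 2).add (continuous_const.mul (hyRc.pow 2))).intervalIntegrable ζ 1)
  -- split the FTC integrals
  rw [intervalIntegral.integral_add (f := fun t => (gL t) ^ 2) (g := fun t => ν ^ 2 * (yL t) ^ 2) ((hgLc.pow 2).intervalIntegrable 0 ζ)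
      ((continuous_const.mul (hyLc.pow 2)).intervalIntegrable 0 ζ),
    intervalIntegral.integral_const_mul] at hFTCL
  rw [intervalIntegral.integral_add (f := fun t => (gR t) ^ 2) (g := fun t => ν ^ 2 * (yR t) ^ 2) ((hgRc.pow 2).intervalIntegrable ζ 1)
      ((continuous_const.mul (hyRc.pow 2)).intervalIntegrable ζ 1),
    intervalIntegral.integral_const_mul] at hFTCR
  -- congruences between g,y and their branches on the two pieces
  have hcgL : ∫ t in (0:ℝ)..ζ, (g t) ^ 2 = ∫ t in (0:ℝ)..ζ, (gL t) ^ 2 := by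
    apply intervalIntegral.integral_congr
    intro t ht
    rw [uIcc_of_le hζ0] at ht
    simp [hgdef, ht.2]
  have hcyL : ∫ t in (0:ℝ)..ζ, (y t) ^ 2 = ∫ t in (0:ℝ)..ζ, (yL t) ^ 2 := by
    apply intervalIntegral.integral_congr
    intro t ht
    rw [uIcc_of_le hζ0] at ht
    simp [hydef, ht.2]
  have hcgR : ∫ t in ζ..(1:ℝ), (g t) ^ 2 = ∫ t in ζ..(1:ℝ), (gR t) ^ 2 := by
    apply intervalIntegral.integral_congr_ae
    apply Filter.Eventually.of_forall
    intro t ht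
    rw [uIoc_of_le hζ1] at ht
    simp [hgdef, not_le.mpr ht.1]
  have hcyR : ∫ t in ζ..(1:ℝ), (y t) ^ 2 = ∫ t in ζ..(1:ℝ), (yR t) ^ 2 := by
    apply intervalIntegral.integral_congr_ae
    apply Filter.Eventually.of_forall
    intro t ht
    rw [uIoc_of_le hζ1] at ht
    simp [hydef, not_le.mpr ht.1]
  -- splits of the full integrals
  have hsplitg : ∫ t in (0:ℝ)..1, (g t) ^ 2
      = (∫ t in (0:ℝ)..ζ, (g t) ^ 2) + ∫ t in ζ..(1:ℝ), (g t) ^ 2 :=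
    (intervalIntegral.integral_add_adjacent_intervals (hg2_ii 0 ζ) (hg2_ii ζ 1)).symm
  have hsplity : ∫ t in (0:ℝ)..1, (y t) ^ 2
      = (∫ t in (0:ℝ)..ζ, (y t) ^ 2) + ∫ t in ζ..(1:ℝ), (y t) ^ 2 :=
    (intervalIntegral.integral_add_adjacent_intervals
      ((hyc.pow 2).intervalIntegrable 0 ζ) ((hyc.pow 2).intervalIntegrable ζ 1)).symm
  -- endpoint values of ΦL, ΦR
  have hΦL0 : ΦL 0 = κ0 * (y 0) ^ 2 := by
    rw [hΦLdef, hy0]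
    simp [Nfun, Dfun]
    ring
  have hΦR1 : ΦR 1 = -(κ1 * (y 1) ^ 2) := by
    rw [hΦRdef, hy1]
    simp [Nfun, Dfun]
    ring
  -- the jump term
  have haζ : (-(pfun ν κ0 ζ + pfun ν κ1 (1 - ζ))) * (y ζ) ^ 2 = -(ΦL ζ) + ΦR ζ := by
    rw [hyζ, hΦLdef, hΦRdef, pfun, pfun, ← hcL, ← hcR]
    field_simp
    ring
  refine ⟨y, g, hIsTest, hden, ?_⟩
  rw [hsplitg, hsplity, hcgL, hcgR, hcyL, hcyR]
  linarith [hFTCL, hFTCR, haζ, hΦL0, hΦR1]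

lemma lowerBound (k0 k1 ν ζ : ℝ) (hν : 0 < ν) (hζ0 : 0 ≤ ζ) (hζ1 : ζ ≤ 1)
    {y g : ℝ → ℝ} (hT : IsTest y g) :
    (-(ν ^ 2)) * (∫ x in (0:ℝ)..1, (y x) ^ 2)
      ≤ (∫ x in (0:ℝ)..1, (g x) ^ 2)
        + (-(pfun ν (k0 ^ 2) ζ + pfun ν (k1 ^ 2) (1 - ζ))) * (y ζ) ^ 2
        + k0 ^ 2 * (y 0) ^ 2 + k1 ^ 2 * (y 1) ^ 2 := by
  obtain ⟨hrep, hgi, hg2i⟩ := hT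
  have hκ0 : 0 ≤ k0 ^ 2 := sq_nonneg k0
  have hκ1 : 0 ≤ k1 ^ 2 := sq_nonneg k1
  have h01 : (0:ℝ) ≤ 1 := by norm_num
  have hsubL : Icc (0:ℝ) ζ ⊆ Icc (0:ℝ) 1 := Icc_subset_Icc le_rfl hζ1
  have hsubR : Icc ζ (1:ℝ) ⊆ Icc (0:ℝ) 1 := Icc_subset_Icc hζ0 le_rfl
  -- interval integrability of g on subintervals of [0,1]
  have hg_ii : ∀ a b : ℝ, 0 ≤ a → a ≤ b → b ≤ 1 → IntervalIntegrable g volume a b := by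
    intro a b ha hab hb
    apply IntegrableOn.intervalIntegrable
    rw [uIcc_of_le hab]
    exact hgi.mono_set (Icc_subset_Icc ha hb)
  have hg2_ii : ∀ a b : ℝ, 0 ≤ a → a ≤ b → b ≤ 1 →
      IntervalIntegrable (fun x => (g x) ^ 2) volume a b := by
    intro a b ha hab hb
    apply IntegrableOn.intervalIntegrable
    rw [uIcc_of_le hab]
    exact hg2i.mono_set (Icc_subset_Icc ha hb)
  -- continuity of y
  have hyc : ContinuousOn y (Icc (0:ℝ) 1) := by
    have hcc : ContinuousOn (fun x => y 0 + ∫ v in (0:ℝ)..x, g v) (Icc (0:ℝ) 1) :=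
      continuousOn_const.add (primitive_continuousOn h01 hgi)
    exact hcc.congr hrep
  have hy2_ii : ∀ a b : ℝ, 0 ≤ a → a ≤ b → b ≤ 1 →
      IntervalIntegrable (fun x => (y x) ^ 2) volume a b := by
    intro a b ha hab hb
    apply ContinuousOn.intervalIntegrable
    rw [uIcc_of_le hab]
    exact (hyc.pow 2).mono (Icc_subset_Icc ha hb)
  -- left piece
  have P1 : pfun ν (k0 ^ 2) ζ * (y ζ) ^ 2 - pfun ν (k0 ^ 2) 0 * (y 0) ^ 2
      - ν ^ 2 * ∫ x in (0:ℝ)..ζ, (y x) ^ 2 ≤ ∫ x in (0:ℝ)..ζ, (g x) ^ 2 := by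
    apply piece_lower_bound hζ0 (hgi.mono_set hsubL) (hg2i.mono_set hsubL)
      (fun x hx => hrep x ⟨hx.1, hx.2.trans hζ1⟩)
      (fun x hx => hasDerivAt_pfun hν hκ0 hx.1)
  -- right piece
  have hyR : ∀ x ∈ Icc ζ 1, y x = y ζ + ∫ v in ζ..x, g v := by
    intro x hx
    have h1 := hrep x ⟨hζ0.trans hx.1, hx.2⟩
    have h2 := hrep ζ ⟨hζ0, hζ1⟩
    have h3 : (∫ v in (0:ℝ)..x, g v) - ∫ v in (0:ℝ)..ζ, g v = ∫ v in ζ..x, g v :=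
      intervalIntegral.integral_interval_sub_left (hg_ii 0 x le_rfl (hζ0.trans hx.1) hx.2)
        (hg_ii 0 ζ le_rfl hζ0 hζ1)
    rw [h1, h2]
    linarith [h3]
  have hqR : ∀ x ∈ Icc ζ 1, HasDerivAt (fun x => -pfun ν (k1 ^ 2) (1 - x))
      (ν ^ 2 - (-pfun ν (k1 ^ 2) (1 - x)) ^ 2) x := by
    intro x hx
    have hinner : HasDerivAt (fun x : ℝ => 1 - x) (-1) x := by
      simpa using (hasDerivAt_id x).const_sub 1
    have h := ((hasDerivAt_pfun hν hκ1 (by linarith [hx.2] : 0 ≤ 1 - x)).comp x hinner).neg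
    exact h.congr_deriv (by ring)
  have P2 : (-pfun ν (k1 ^ 2) (1 - 1)) * (y 1) ^ 2 - (-pfun ν (k1 ^ 2) (1 - ζ)) * (y ζ) ^ 2
      - ν ^ 2 * ∫ x in ζ..(1:ℝ), (y x) ^ 2 ≤ ∫ x in ζ..(1:ℝ), (g x) ^ 2 := by
    apply piece_lower_bound hζ1 (hgi.mono_set hsubR) (hg2i.mono_set hsubR) hyR hqR
  -- endpoint values
  have hp0 : pfun ν (k0 ^ 2) 0 = k0 ^ 2 := pfun_zero hν.ne'
  have hp1 : pfun ν (k1 ^ 2) (1 - 1) = k1 ^ 2 := by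
    rw [show (1:ℝ) - 1 = 0 by norm_num]; exact pfun_zero hν.ne'
  -- splits
  have hsplitg : ∫ t in (0:ℝ)..1, (g t) ^ 2
      = (∫ t in (0:ℝ)..ζ, (g t) ^ 2) + ∫ t in ζ..(1:ℝ), (g t) ^ 2 :=
    (intervalIntegral.integral_add_adjacent_intervals
      (hg2_ii 0 ζ le_rfl hζ0 hζ1) (hg2_ii ζ 1 hζ0 hζ1 le_rfl)).symm
  have hsplity : ∫ t in (0:ℝ)..1, (y t) ^ 2
      = (∫ t in (0:ℝ)..ζ, (y t) ^ 2) + ∫ t in ζ..(1:ℝ), (y t) ^ 2 :=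
    (intervalIntegral.integral_add_adjacent_intervals
      (hy2_ii 0 ζ le_rfl hζ0 hζ1) (hy2_ii ζ 1 hζ0 hζ1 le_rfl)).symm
  have hexp : (-(pfun ν (k0 ^ 2) ζ + pfun ν (k1 ^ 2) (1 - ζ))) * (y ζ) ^ 2
      = -(pfun ν (k0 ^ 2) ζ * (y ζ) ^ 2) - (-pfun ν (k1 ^ 2) (1 - ζ)) * (y ζ) ^ 2 * (-1) := by
    ring
  rw [hsplitg, hsplity, hexp]
  rw [hp0] at P1
  rw [hp1] at P2
  nlinarith [P1, P2]

theorem stmt15 (k0 k1 : ℝ) (hk0 : 0 ≤ k0) (hk01 : k0 ≤ k1)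
    (μ ζ : ℝ) (hμ : μ < 0) (hζ : ζ ∈ Icc (0:ℝ) 1) :
    lam1Delta k0 k1
      (-(Real.sqrt |μ|) * (Gfun (Real.sqrt |μ|) (k0 ^ 2) ζ
        + Gfun (Real.sqrt |μ|) (k1 ^ 2) (1 - ζ))) ζ = μ := by
  obtain ⟨hζ0, hζ1⟩ := hζ
  set ν := Real.sqrt |μ| with hνdef
  have hμabs : |μ| = -μ := abs_of_neg hμ
  have hν : 0 < ν := Real.sqrt_pos.mpr (by rw [hμabs]; linarith)
  have hν2 : ν ^ 2 = -μ := by rw [hνdef, Real.sq_sqrt (abs_nonneg μ), hμabs]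
  have hμν : μ = -(ν ^ 2) := by rw [hν2]; ring
  have hG : -ν * (Gfun ν (k0 ^ 2) ζ + Gfun ν (k1 ^ 2) (1 - ζ))
      = -(pfun ν (k0 ^ 2) ζ + pfun ν (k1 ^ 2) (1 - ζ)) := by
    have h1 := G_eq hν (sq_nonneg k0) hζ0
    have h2 := G_eq hν (sq_nonneg k1) (by linarith : (0:ℝ) ≤ 1 - ζ)
    linear_combination -h1 - h2
  rw [show lam1Delta k0 k1 (-ν * (Gfun ν (k0 ^ 2) ζ + Gfun ν (k1 ^ 2) (1 - ζ))) ζ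
      = lam1Delta k0 k1 (-(pfun ν (k0 ^ 2) ζ + pfun ν (k1 ^ 2) (1 - ζ))) ζ from by rw [hG]]
  set a := -(pfun ν (k0 ^ 2) ζ + pfun ν (k1 ^ 2) (1 - ζ)) with hadef
  set S := { r : ℝ | ∃ y g : ℝ → ℝ, IsTest y g ∧ (0 < ∫ x in (0:ℝ)..1, (y x) ^ 2) ∧
    r = ((∫ x in (0:ℝ)..1, (g x) ^ 2) + a * (y ζ) ^ 2
          + k0 ^ 2 * (y 0) ^ 2 + k1 ^ 2 * (y 1) ^ 2) / (∫ x in (0:ℝ)..1, (y x) ^ 2) }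
    with hSdef
  have hmem : μ ∈ S := by
    obtain ⟨y, g, hT, hden, hnum⟩ := member k0 k1 ν ζ hν hζ0 hζ1
    refine ⟨y, g, hT, hden, ?_⟩
    rw [hadef, hnum, mul_div_assoc, div_self hden.ne', mul_one, hμν]
  have hlb : ∀ r ∈ S, μ ≤ r := by
    rintro r ⟨y, g, hT, hden, rfl⟩
    rw [le_div_iff₀ hden, hμν]
    calc -(ν ^ 2) * ∫ x in (0:ℝ)..1, (y x) ^ 2
        ≤ (∫ x in (0:ℝ)..1, (g x) ^ 2) + a * (y ζ) ^ 2
          + k0 ^ 2 * (y 0) ^ 2 + k1 ^ 2 * (y 1) ^ 2 := by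
          rw [hadef]; exact lowerBound k0 k1 ν ζ hν hζ0 hζ1 hT
      _ = _ := rfl
  exact le_antisymm (csInf_le ⟨μ, fun r hr => hlb r hr⟩ hmem) (le_csInf ⟨μ, hmem⟩ hlb)
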